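/- Let p : Fin k → ℝ³ satisfy ⟨p i, p i⟩ = (ℓ i)² for all i (with ℓ i > 0) and ∑ i, p i = 0, and suppose the vectors p i are not all collinear. Then the system of linear equations in unknowns t : Fin k → ℝ³ given by ⟨t i, p i⟩ = 0 for all i together with ∑ i, t i = 0 has solution space of dimension exactly 2k − 3. -/

import Mathlib

open scoped InnerProductSpace

/-- The tangent space to the polygon space at a smooth (non-collinear) point
has dimension `2k - 3`. -/
theorem polygon_tangent_dim_smooth (k : ℕ)
    (p : Fin k → EuclideanSpace ℝ (Fin 3)) (ℓ : Fin k → ℝ)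
    (hℓ : ∀ i, 0 < ℓ i)
    (hlen : ∀ i, ⟪p i, p i⟫_ℝ = (ℓ i) ^ 2)
    (hsum : ∑ i, p i = 0)
    (hcol : ¬ ∃ v : EuclideanSpace ℝ (Fin 3), ∀ i, ∃ c : ℝ, p i = c • v)
    (T : Submodule ℝ (Fin k → EuclideanSpace ℝ (Fin 3)))
    (hT : ∀ t, t ∈ T ↔ ((∀ i, ⟪t i, p i⟫_ℝ = 0) ∧ ∑ i, t i = 0)) :
    Module.finrank ℝ T = 2 * k - 3 := by
  classical
  let Φ : (Fin k → EuclideanSpace ℝ (Fin 3)) →ₗ[ℝ] (Fin k → ℝ) × EuclideanSpace ℝ (Fin 3) :=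
    LinearMap.prod
      (LinearMap.pi fun i => (innerSL ℝ (p i)).toLinearMap.comp (LinearMap.proj i))
      (∑ i, LinearMap.proj i)
  have hker : T = LinearMap.ker Φ := by
    ext t
    rw [hT, LinearMap.mem_ker]
    simp only [Φ, LinearMap.prod_apply, Function.prod, Prod.mk_eq_zero, LinearMap.pi_apply,
      LinearMap.comp_apply, LinearMap.proj_apply, ContinuousLinearMap.coe_coe, innerSL_apply_apply,
      LinearMap.coe_sum, Finset.sum_apply, funext_iff, Pi.zero_apply]
    constructor
    · rintro ⟨h1, h2⟩
      exact ⟨fun i => by rw [real_inner_comm]; exact h1 i, h2⟩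
    · rintro ⟨h1, h2⟩
      exact ⟨fun i => by rw [real_inner_comm]; exact h1 i, h2⟩
  have hk : k ≠ 0 := by
    rintro rfl
    exact hcol ⟨0, fun i => i.elim0⟩
  have i₀ : Fin k := ⟨0, Nat.pos_of_ne_zero hk⟩
  obtain ⟨j, hj⟩ : ∃ j, p j ∉ Submodule.span ℝ {p i₀} := by
    by_contra h
    push_neg at h
    refine hcol ⟨p i₀, fun i => ?_⟩
    obtain ⟨c, hc⟩ := Submodule.mem_span_singleton.mp (h i)
    exact ⟨c, hc.symm⟩
  set K := Submodule.span ℝ {p i₀} with hK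
  set L := Submodule.span ℝ {p j} with hL
  have hKL : K ⊓ L = ⊥ := by
    rw [eq_bot_iff]
    rintro x ⟨hxK, hxL⟩
    obtain ⟨c, hc⟩ := Submodule.mem_span_singleton.mp hxK
    obtain ⟨d, hd⟩ := Submodule.mem_span_singleton.mp hxL
    rcases eq_or_ne d 0 with rfl | hd0
    · rw [zero_smul] at hd
      rw [← hd] at hc ⊢
      exact Submodule.mem_bot ℝ |>.mpr rfl
    · exfalso
      apply hj
      rw [hK, Submodule.mem_span_singleton]
      refine ⟨c / d, ?_⟩
      have : p j = d⁻¹ • (d • p j) := by rw [smul_smul, inv_mul_cancel₀ hd0, one_smul]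
      rw [this, hd, ← hc, smul_smul, div_eq_inv_mul]
  have hsup : Kᗮ ⊔ Lᗮ = ⊤ := by
    have h1 : (Kᗮ ⊔ Lᗮ)ᗮ = ⊥ := by
      rw [← Submodule.inf_orthogonal, Submodule.orthogonal_orthogonal,
        Submodule.orthogonal_orthogonal, hKL]
    have h2 := congrArg (fun S : Submodule ℝ (EuclideanSpace ℝ (Fin 3)) => Sᗮ) h1
    simpa [Submodule.orthogonal_orthogonal, Submodule.bot_orthogonal_eq_top] using h2
  have hsurj : Function.Surjective Φ := by
    rintro ⟨a, w⟩
    set b : Fin k → EuclideanSpace ℝ (Fin 3) := fun i => (a i / (ℓ i) ^ 2) • p i with hb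
    have hbinner : ∀ i, ⟪p i, b i⟫_ℝ = a i := by
      intro i
      simp only [hb, inner_smul_right]
      rw [hlen i]
      have h0 : (ℓ i) ^ 2 ≠ 0 := pow_ne_zero _ (hℓ i).ne'
      field_simp
      exact mul_div_cancel_right₀ _ (hℓ i).ne'
    set u : EuclideanSpace ℝ (Fin 3) := w - ∑ i, b i with hu
    have hu' : u ∈ Kᗮ ⊔ Lᗮ := hsup ▸ Submodule.mem_top
    obtain ⟨x, hx, y, hy, hxy⟩ := Submodule.mem_sup.mp hu'
    refine ⟨b + Pi.single i₀ x + Pi.single j y, ?_⟩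
    have hxi : ∀ i, ⟪p i, Pi.single (M := fun _ => EuclideanSpace ℝ (Fin 3)) i₀ x i⟫_ℝ = 0 := by
      intro i
      rcases eq_or_ne i i₀ with rfl | h
      · rw [Pi.single_eq_same]
        exact hx (p i) (Submodule.mem_span_singleton_self _)
      · rw [Pi.single_eq_of_ne h, inner_zero_right]
    have hyi : ∀ i, ⟪p i, Pi.single (M := fun _ => EuclideanSpace ℝ (Fin 3)) j y i⟫_ℝ = 0 := by
      intro i
      rcases eq_or_ne i j with rfl | h
      · rw [Pi.single_eq_same]
        exact hy (p i) (Submodule.mem_span_singleton_self _)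
      · rw [Pi.single_eq_of_ne h, inner_zero_right]
    have hsum1 : (∑ i, (b + Pi.single (M := fun _ => EuclideanSpace ℝ (Fin 3)) i₀ x + Pi.single (M := fun _ => EuclideanSpace ℝ (Fin 3)) j y) i) = w := by
      simp only [Pi.add_apply, Finset.sum_add_distrib]
      rw [Finset.sum_pi_single' i₀ x, Finset.sum_pi_single' j y]
      simp only [Finset.mem_univ, if_true]
      rw [show (∑ i, b i) + x + y = (∑ i, b i) + (x + y) by module, hxy, hu]
      abel
    ext i
    · simp only [Φ, LinearMap.prod_apply, Function.prod, LinearMap.pi_apply, LinearMap.comp_apply,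
        LinearMap.proj_apply, ContinuousLinearMap.coe_coe, innerSL_apply_apply, Pi.add_apply]
      rw [inner_add_right, inner_add_right, hbinner i, hxi i, hyi i]
      ring
    · simp only [Φ, LinearMap.prod_apply, Function.prod, LinearMap.coe_sum, Finset.sum_apply,
        LinearMap.proj_apply]
      exact congrArg (fun v : EuclideanSpace ℝ (Fin 3) => v i) hsum1
  have hrn := LinearMap.finrank_range_add_finrank_ker Φ
  rw [LinearMap.range_eq_top.mpr hsurj, finrank_top] at hrn
  have h1 : Module.finrank ℝ ((Fin k → ℝ) × EuclideanSpace ℝ (Fin 3)) = k + 3 := by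
    simp [Module.finrank_prod, finrank_euclideanSpace]
  have h2 : Module.finrank ℝ (Fin k → EuclideanSpace ℝ (Fin 3)) = k * 3 := by
    simp [Module.finrank_pi_fintype, finrank_euclideanSpace]
  rw [h1, h2] at hrn
  rw [hker]
  omega
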